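/- Let C ⊆ ℝⁿ be a nonempty closed convex cone, let Y > 0 be real, let Z, φ ∈ ℝⁿ, set ξ = Proj_C(Yφ − Z) and η := −(1/Y)(Z + ξ). Then Y‖η‖² + 2⟪η, Z⟫ + (1/Y)·dist(Yφ − Z, C)² − (1/Y)‖Yφ − Z‖² + (1/Y)‖Z‖² = 0. -/

import Mathlib

/-- Identity (substep2): with `ξ = Proj_C(Yφ − Z)` and `η = −(1/Y)(Z + ξ)` for a
nonempty closed convex cone `C` and `Y > 0`,
`Y‖η‖² + 2⟪η, Z⟫ + (1/Y)dist(Yφ − Z, C)² − (1/Y)‖Yφ − Z‖² + (1/Y)‖Z‖² = 0`. -/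
theorem stmt_7 {n : ℕ} (C : Set (EuclideanSpace ℝ (Fin n)))
    (hne : C.Nonempty) (hclosed : IsClosed C) (hconv : Convex ℝ C)
    (hcone : ∀ u ∈ C, ∀ l : ℝ, 0 ≤ l → l • u ∈ C)
    (Y : ℝ) (hY : 0 < Y) (Z φ ξ : EuclideanSpace ℝ (Fin n)) (hξC : ξ ∈ C)
    (hproj : ∀ b ∈ C, ‖(Y • φ - Z) - ξ‖ ≤ ‖(Y • φ - Z) - b‖)
    (η : EuclideanSpace ℝ (Fin n)) (hη : η = -(1 / Y) • (Z + ξ)) :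
    Y * ‖η‖ ^ 2 + 2 * (inner ℝ η Z : ℝ)
      + (1 / Y) * (Metric.infDist (Y • φ - Z) C) ^ 2
      - (1 / Y) * ‖Y • φ - Z‖ ^ 2 + (1 / Y) * ‖Z‖ ^ 2 = 0 := by
  set a : EuclideanSpace ℝ (Fin n) := Y • φ - Z with ha
  -- infDist is attained at ξ
  have hdist : Metric.infDist a C = ‖a - ξ‖ := by
    apply le_antisymm
    · calc Metric.infDist a C ≤ dist a ξ := Metric.infDist_le_dist_of_mem hξC
        _ = ‖a - ξ‖ := dist_eq_norm a ξ
    · haveI := hne.to_subtype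
      rw [Metric.infDist_eq_iInf]
      exact le_ciInf fun w => by rw [dist_eq_norm]; exact hproj w w.2
  -- orthogonality: ⟪a - ξ, ξ⟫ = 0
  have hinf : ‖a - ξ‖ = ⨆ _ : Unit, ‖a - ξ‖ := by simp
  have hchar : ∀ w ∈ C, (inner ℝ (a - ξ) (w - ξ) : ℝ) ≤ 0 := by
    have hval : ‖a - ξ‖ = ⨅ w : C, ‖a - w‖ := by
      apply le_antisymm
      · haveI := hne.to_subtype
        exact le_ciInf fun w => hproj w w.2
      · exact ciInf_le ⟨0, by rintro r ⟨w, rfl⟩; positivity⟩ (⟨ξ, hξC⟩ : C)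
    exact (norm_eq_iInf_iff_real_inner_le_zero hconv hξC).mp hval
  have h0 : (0 : EuclideanSpace ℝ (Fin n)) ∈ C := by
    obtain ⟨u, hu⟩ := hne
    simpa using hcone u hu 0 le_rfl
  have h2 : (2 : ℝ) • ξ ∈ C := hcone ξ hξC 2 (by norm_num)
  have key : (inner ℝ (a - ξ) ξ : ℝ) = 0 := by
    have h1 := hchar 0 h0
    have h2' := hchar ((2 : ℝ) • ξ) h2
    have e1 : ((0 : EuclideanSpace ℝ (Fin n)) - ξ) = -ξ := by simp
    have e2 : ((2 : ℝ) • ξ - ξ) = ξ := by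
      rw [two_smul]; abel
    rw [e1, inner_neg_right] at h1
    rw [e2] at h2'
    linarith
  -- expand everything
  have hkey' : (inner ℝ a ξ : ℝ) = ‖ξ‖ ^ 2 := by
    have := key
    rw [inner_sub_left, real_inner_self_eq_norm_sq] at this
    linarith
  have hη2 : ‖η‖ ^ 2 = (1 / Y) ^ 2 * ‖Z + ξ‖ ^ 2 := by
    rw [hη, norm_smul]
    have : |(-(1 / Y))| = 1 / Y := by
      rw [abs_neg, abs_of_pos (by positivity)]
    simp [Real.norm_eq_abs, this, mul_pow]
  have hηZ : (inner ℝ η Z : ℝ) = -(1 / Y) * (inner ℝ (Z + ξ) Z : ℝ) := by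
    rw [hη, real_inner_smul_left]
  have hZξ : ‖Z + ξ‖ ^ 2 = ‖Z‖ ^ 2 + 2 * (inner ℝ Z ξ : ℝ) + ‖ξ‖ ^ 2 := by
    rw [← real_inner_self_eq_norm_sq, inner_add_add_self,
      real_inner_self_eq_norm_sq, real_inner_self_eq_norm_sq, real_inner_comm ξ Z]
    ring
  have haξ : ‖a - ξ‖ ^ 2 = ‖a‖ ^ 2 - 2 * (inner ℝ a ξ : ℝ) + ‖ξ‖ ^ 2 := by
    rw [← real_inner_self_eq_norm_sq, inner_sub_sub_self,
      real_inner_self_eq_norm_sq, real_inner_self_eq_norm_sq, real_inner_comm ξ a]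
    ring
  have hZZ : (inner ℝ (Z + ξ) Z : ℝ) = ‖Z‖ ^ 2 + (inner ℝ Z ξ : ℝ) := by
    rw [inner_add_left, real_inner_self_eq_norm_sq, real_inner_comm ξ Z]
  rw [hdist, hη2, hηZ, hZξ, haξ, hkey', hZZ]
  field_simp
  ring
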